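/- Let K ≥ 0, d ≥ 0 and C ∈ ℝ, and let μ and μ_n (n ∈ ℕ) be finite Borel measures on [0, K] with μ([0,K]) = μ_n([0,K]) = d for all n, such that ∫ t^m dμ_n(t) → ∫ t^m dμ(t) as n → ∞ for every m ∈ ℕ. Assume additionally that ∫_{(0,K]} ln(t) dμ_n(t) ≥ C for all n (in particular these integrals are not −∞). Then ∫_{(0,K]} ln(t) dμ(t) ≥ C, and μ_n({0}) → μ({0}) as n → ∞. -/

import Mathlib

open MeasureTheory Filter
open scoped ENNReal

lemma aux_ae_mem_Icc {μ : Measure ℝ} {K : ℝ} (h : μ (Set.Icc 0 K)ᶜ = 0) :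
    ∀ᵐ t ∂μ, t ∈ Set.Icc (0:ℝ) K := by
  rw [MeasureTheory.ae_iff]
  exact h

lemma aux_integrable_of_cont {μ : Measure ℝ} [IsFiniteMeasure μ] {K : ℝ}
    (h : ∀ᵐ t ∂μ, t ∈ Set.Icc (0:ℝ) K) {f : ℝ → ℝ} (hf : Continuous f) :
    Integrable f μ := by
  obtain ⟨B, hB⟩ := (isCompact_Icc (a := (0:ℝ)) (b := K)).exists_bound_of_continuousOn
    hf.continuousOn
  exact (integrable_const B).mono' hf.aestronglyMeasurable
    (h.mono fun t ht => by simpa using hB t ht)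

lemma aux_Icc_eq_union {K : ℝ} (hK : 0 ≤ K) :
    Set.Icc (0:ℝ) K = {0} ∪ Set.Ioc 0 K := by
  ext t
  simp only [Set.mem_Icc, Set.mem_union, Set.mem_singleton_iff, Set.mem_Ioc]
  constructor
  · rintro ⟨h1, h2⟩
    rcases eq_or_lt_of_le h1 with h | h
    · exact Or.inl h.symm
    · exact Or.inr ⟨h, h2⟩
  · rintro (rfl | ⟨h1, h2⟩)
    · exact ⟨le_rfl, hK⟩
    · exact ⟨h1.le, h2⟩

lemma aux_integral_decomp {μ : Measure ℝ} [IsFiniteMeasure μ] {K : ℝ} (hK : 0 ≤ K)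
    (hsupp : μ (Set.Icc 0 K)ᶜ = 0) {f : ℝ → ℝ} (hf : Continuous f) :
    ∫ t, f t ∂μ = f 0 * (μ {0}).toReal + ∫ t in Set.Ioc 0 K, f t ∂μ := by
  have hint : Integrable f μ := aux_integrable_of_cont (aux_ae_mem_Icc hsupp) hf
  have h1 : ∫ t, f t ∂μ = ∫ t in Set.Icc 0 K, f t ∂μ := by
    rw [← integral_add_compl (measurableSet_Icc (a := (0:ℝ)) (b := K)) hint]
    rw [Measure.restrict_eq_zero.mpr hsupp, integral_zero_measure, add_zero]
  have hdisj : Disjoint ({0} : Set ℝ) (Set.Ioc 0 K) := by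
    simp
  rw [h1, aux_Icc_eq_union hK,
    setIntegral_union hdisj measurableSet_Ioc hint.integrableOn hint.integrableOn,
    integral_singleton]
  rw [smul_eq_mul, mul_comm]
  rfl

lemma aux_integral_poly_eq {K : ℝ} (ν : Measure ℝ) [IsFiniteMeasure ν]
    (hν : ν (Set.Icc 0 K)ᶜ = 0) (p : Polynomial ℝ) :
    ∫ t, p.eval t ∂ν
      = ∑ i ∈ Finset.range (p.natDegree + 1), p.coeff i * ∫ t, t ^ i ∂ν := by
  have h1 : ∫ t, p.eval t ∂ν
      = ∫ t, ∑ i ∈ Finset.range (p.natDegree + 1), p.coeff i * t ^ i ∂ν := by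
    congr 1
    ext t
    exact Polynomial.eval_eq_sum_range t
  rw [h1, integral_finset_sum]
  · exact Finset.sum_congr rfl fun i _ => MeasureTheory.integral_const_mul _ _
  · intro i _
    exact (aux_integrable_of_cont (aux_ae_mem_Icc hν) (continuous_pow i)).const_mul _

lemma aux_tendsto_integral_poly {K : ℝ}
    {μ : Measure ℝ} {μn : ℕ → Measure ℝ}
    [IsFiniteMeasure μ] [∀ n, IsFiniteMeasure (μn n)]
    (hsupp : μ (Set.Icc 0 K)ᶜ = 0) (hsuppn : ∀ n, μn n (Set.Icc 0 K)ᶜ = 0)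
    (hmom : ∀ m : ℕ, Tendsto (fun n => ∫ t, t ^ m ∂(μn n)) atTop (nhds (∫ t, t ^ m ∂μ)))
    (p : Polynomial ℝ) :
    Tendsto (fun n => ∫ t, p.eval t ∂(μn n)) atTop (nhds (∫ t, p.eval t ∂μ)) := by
  have h1 : ∀ n, ∫ t, p.eval t ∂(μn n)
      = ∑ i ∈ Finset.range (p.natDegree + 1), p.coeff i * ∫ t, t ^ i ∂(μn n) :=
    fun n => aux_integral_poly_eq (μn n) (hsuppn n) p
  simp only [h1, aux_integral_poly_eq μ hsupp p]
  exact tendsto_finset_sum _ fun i _ => (hmom i).const_mul _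

lemma aux_tendsto_integral_cont {K d : ℝ} (hd : 0 ≤ d)
    {μ : Measure ℝ} {μn : ℕ → Measure ℝ}
    [IsFiniteMeasure μ] [∀ n, IsFiniteMeasure (μn n)]
    (hsupp : μ (Set.Icc 0 K)ᶜ = 0) (hsuppn : ∀ n, μn n (Set.Icc 0 K)ᶜ = 0)
    (hmass : μ Set.univ = ENNReal.ofReal d)
    (hmassn : ∀ n, μn n Set.univ = ENNReal.ofReal d)
    (hmom : ∀ m : ℕ, Tendsto (fun n => ∫ t, t ^ m ∂(μn n)) atTop (nhds (∫ t, t ^ m ∂μ)))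
    {f : ℝ → ℝ} (hf : Continuous f) :
    Tendsto (fun n => ∫ t, f t ∂(μn n)) atTop (nhds (∫ t, f t ∂μ)) := by
  rw [Metric.tendsto_atTop]
  intro ε hε
  have hδ : 0 < ε / (4 * (d + 1)) := by positivity
  obtain ⟨p, hp⟩ := exists_polynomial_near_of_continuousOn 0 K f hf.continuousOn
    (ε / (4 * (d + 1))) hδ
  have key : ∀ (ν : Measure ℝ) [IsFiniteMeasure ν], ν (Set.Icc 0 K)ᶜ = 0 →
      ν Set.univ = ENNReal.ofReal d →
      |(∫ t, f t ∂ν) - ∫ t, p.eval t ∂ν| ≤ ε / 4 := by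
    intro ν _ hν hνd
    have hif : Integrable f ν := aux_integrable_of_cont (aux_ae_mem_Icc hν) hf
    have hip : Integrable (fun t => p.eval t) ν :=
      aux_integrable_of_cont (aux_ae_mem_Icc hν) (p.continuous_aeval)
    rw [← integral_sub hif hip]
    have hb : ∀ᵐ t ∂ν, ‖f t - p.eval t‖ ≤ ε / (4 * (d + 1)) := by
      filter_upwards [aux_ae_mem_Icc hν] with t ht
      rw [Real.norm_eq_abs, abs_sub_comm]
      exact (hp t ht).le
    have := norm_integral_le_of_norm_le_const hb (μ := ν)
    rw [Real.norm_eq_abs] at this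
    refine this.trans ?_
    have hm : ν.real Set.univ = d := by rw [measureReal_def, hνd, ENNReal.toReal_ofReal hd]
    rw [hm]
    rw [div_mul_eq_mul_div, div_le_div_iff₀ (by positivity) (by norm_num)]
    nlinarith
  obtain ⟨N, hN⟩ := Metric.tendsto_atTop.mp
    (aux_tendsto_integral_poly hsupp hsuppn hmom p) (ε / 4) (by positivity)
  refine ⟨N, fun n hn => ?_⟩
  have h2 := hN n hn
  rw [Real.dist_eq] at h2 ⊢
  have k1 := key (μn n) (hsuppn n) (hmassn n)
  have k2 := key μ hsupp hmass
  calc |(∫ t, f t ∂(μn n)) - ∫ t, f t ∂μ|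
      ≤ |(∫ t, f t ∂(μn n)) - ∫ t, p.eval t ∂(μn n)|
        + |(∫ t, p.eval t ∂(μn n)) - ∫ t, p.eval t ∂μ|
        + |(∫ t, p.eval t ∂μ) - ∫ t, f t ∂μ| := by
        have := abs_sub_le (∫ t, f t ∂(μn n)) (∫ t, p.eval t ∂(μn n)) (∫ t, f t ∂μ)
        have := abs_sub_le (∫ t, p.eval t ∂(μn n)) (∫ t, p.eval t ∂μ) (∫ t, f t ∂μ)
        linarith [abs_sub_le (∫ t, f t ∂(μn n)) (∫ t, p.eval t ∂(μn n)) (∫ t, f t ∂μ),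
          abs_sub_le (∫ t, p.eval t ∂(μn n)) (∫ t, p.eval t ∂μ) (∫ t, f t ∂μ)]
    _ < ε := by
        rw [abs_sub_comm] at k2
        linarith [abs_sub_comm (∫ t, p.eval t ∂μ) (∫ t, f t ∂μ)]

-- mass of any set ≤ d
lemma aux_mass_le {d : ℝ} (hd : 0 ≤ d) {ν : Measure ℝ}
    (hνd : ν Set.univ = ENNReal.ofReal d) (s : Set ℝ) : (ν s).toReal ≤ d := by
  have h1 : ν s ≤ ENNReal.ofReal d := hνd ▸ measure_mono (Set.subset_univ s)
  calc (ν s).toReal ≤ (ENNReal.ofReal d).toReal :=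
        ENNReal.toReal_mono ENNReal.ofReal_ne_top h1
    _ = d := ENNReal.toReal_ofReal hd

lemma aux_Ioc_disjoint {a b c : ℝ} : Disjoint (Set.Ioc a b) (Set.Ioc b c) :=
  Set.disjoint_left.mpr fun x hx1 hx2 => absurd hx2.1 (not_lt.mpr hx1.2)

/-- Key uniform bound: mass of `(0, min ε K]` is controlled by the log-moment bound. -/
lemma aux_small_mass {K d C : ℝ} (hK : 0 ≤ K) (hd : 0 ≤ d) {ν : Measure ℝ}
    [IsFiniteMeasure ν]
    (hνd : ν Set.univ = ENNReal.ofReal d)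
    (hlog : IntegrableOn Real.log (Set.Ioc 0 K) ν)
    (hdet : C ≤ ∫ t in Set.Ioc 0 K, Real.log t ∂ν)
    {ε : ℝ} (hε0 : 0 < ε) (hε1 : ε < 1) :
    (ν (Set.Ioc 0 (min ε K))).toReal * (-Real.log ε)
      ≤ max (max (Real.log K) 0 * d - C) 0 := by
  set m := min ε K with hm
  set L := max (Real.log K) 0 with hL
  set a := (ν (Set.Ioc 0 m)).toReal with ha
  have hm0 : 0 ≤ m := le_min hε0.le hK
  have hmK : m ≤ K := min_le_right _ _
  have hsplit : Set.Ioc (0:ℝ) K = Set.Ioc 0 m ∪ Set.Ioc m K :=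
    (Set.Ioc_union_Ioc_eq_Ioc hm0 hmK).symm
  have hint1 : IntegrableOn Real.log (Set.Ioc 0 m) ν :=
    hlog.mono_set (Set.Ioc_subset_Ioc_right hmK)
  have hint2 : IntegrableOn Real.log (Set.Ioc m K) ν :=
    hlog.mono_set (Set.Ioc_subset_Ioc_left hm0)
  have hsum : ∫ t in Set.Ioc 0 K, Real.log t ∂ν
      = (∫ t in Set.Ioc 0 m, Real.log t ∂ν) + ∫ t in Set.Ioc m K, Real.log t ∂ν := by
    rw [hsplit, setIntegral_union aux_Ioc_disjoint measurableSet_Ioc hint1 hint2]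
  have hb1 : ∫ t in Set.Ioc 0 m, Real.log t ∂ν ≤ a * Real.log ε := by
    have := setIntegral_mono_on hint1 (integrableOn_const (measure_lt_top ν _).ne)
      measurableSet_Ioc (fun t ht => Real.log_le_log ht.1 (ht.2.trans (min_le_left _ _)))
    rwa [setIntegral_const, smul_eq_mul] at this
  have hb2 : ∫ t in Set.Ioc m K, Real.log t ∂ν ≤ L * d := by
    have h1 : ∫ t in Set.Ioc m K, Real.log t ∂ν ≤ (ν (Set.Ioc m K)).toReal * L := by
      have h2 : ∫ t in Set.Ioc m K, Real.log t ∂ν ≤ ∫ _t in Set.Ioc m K, L ∂ν := by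
        refine setIntegral_mono_on hint2
          (integrableOn_const (measure_lt_top ν _).ne) measurableSet_Ioc ?_
        intro t ht
        exact le_max_of_le_left (Real.log_le_log (hm0.trans_lt ht.1) ht.2)
      rwa [setIntegral_const, smul_eq_mul] at h2
    refine h1.trans ?_
    have hL0 : 0 ≤ L := le_max_right _ _
    calc (ν (Set.Ioc m K)).toReal * L ≤ d * L :=
          mul_le_mul_of_nonneg_right (aux_mass_le hd hνd _) hL0
      _ = L * d := mul_comm _ _
  have ha0 : 0 ≤ a := ENNReal.toReal_nonneg
  have hC : C ≤ a * Real.log ε + L * d := by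
    rw [hsum] at hdet; linarith
  have : a * (-Real.log ε) ≤ L * d - C := by nlinarith
  exact this.trans (le_max_left _ _)

/-- Bump-function integral is within `ν ((0, min ε K])` of the atom at 0. -/
lemma aux_g_est {K : ℝ} (hK : 0 ≤ K) {ν : Measure ℝ} [IsFiniteMeasure ν]
    (hsupp : ν (Set.Icc 0 K)ᶜ = 0) {ε : ℝ} (hε : 0 < ε) :
    |(∫ t, max 0 (1 - t / ε) ∂ν) - (ν {0}).toReal|
      ≤ (ν (Set.Ioc 0 (min ε K))).toReal := by
  have hgc : Continuous fun t : ℝ => max 0 (1 - t / ε) :=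
    continuous_const.max (by continuity)
  have hdec := aux_integral_decomp hK hsupp hgc
  have hg0 : max 0 (1 - (0:ℝ) / ε) = 1 := by norm_num
  rw [hdec, hg0, one_mul, add_sub_cancel_left]
  set m := min ε K with hm
  have hm0 : 0 ≤ m := le_min hε.le hK
  have hmK : m ≤ K := min_le_right _ _
  have hint : Integrable (fun t => max 0 (1 - t / ε)) ν :=
    aux_integrable_of_cont (aux_ae_mem_Icc hsupp) hgc
  have hsplit : Set.Ioc (0:ℝ) K = Set.Ioc 0 m ∪ Set.Ioc m K :=
    (Set.Ioc_union_Ioc_eq_Ioc hm0 hmK).symm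
  have hzero : ∫ t in Set.Ioc m K, max 0 (1 - t / ε) ∂ν = 0 := by
    refine setIntegral_eq_zero_of_forall_eq_zero fun t ht => ?_
    rcases min_cases ε K with ⟨h1, _⟩ | ⟨h1, _⟩
    · have : ε < t := by rw [hm, h1] at ht; exact ht.1
      have : 1 - t / ε ≤ 0 := by
        rw [sub_nonpos, le_div_iff₀ hε]; nlinarith
      exact max_eq_left this
    · exfalso
      rw [hm, h1] at ht
      exact absurd ht.2 (not_le.mpr ht.1)
  have hsum : ∫ t in Set.Ioc 0 K, max 0 (1 - t / ε) ∂ν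
      = ∫ t in Set.Ioc 0 m, max 0 (1 - t / ε) ∂ν := by
    rw [hsplit, setIntegral_union aux_Ioc_disjoint measurableSet_Ioc
      hint.integrableOn hint.integrableOn, hzero, add_zero]
  rw [hsum]
  have hub : ∫ t in Set.Ioc 0 m, max 0 (1 - t / ε) ∂ν ≤ (ν (Set.Ioc 0 m)).toReal := by
    have h1 : ∫ t in Set.Ioc 0 m, max 0 (1 - t / ε) ∂ν ≤ ∫ _t in Set.Ioc 0 m, (1:ℝ) ∂ν := by
      refine setIntegral_mono_on hint.integrableOn
        (integrableOn_const (measure_lt_top ν _).ne) measurableSet_Ioc ?_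
      intro t ht
      have h2 : 0 ≤ t / ε := div_nonneg ht.1.le hε.le
      exact max_le (by norm_num) (by linarith)
    rw [setIntegral_const, smul_eq_mul, mul_one] at h1
    exact h1
  have hlb : 0 ≤ ∫ t in Set.Ioc 0 m, max 0 (1 - t / ε) ∂ν :=
    setIntegral_nonneg measurableSet_Ioc fun t _ => le_max_left _ _
  rw [abs_le]
  constructor <;> [linarith [ENNReal.toReal_nonneg (a := ν (Set.Ioc 0 m))]; linarith]

lemma aux_atom_tendsto {K d C : ℝ} (hK : 0 ≤ K) (hd : 0 ≤ d)
    {μ : Measure ℝ} {μn : ℕ → Measure ℝ}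
    [IsFiniteMeasure μ] [∀ n, IsFiniteMeasure (μn n)]
    (hsupp : μ (Set.Icc 0 K)ᶜ = 0) (hsuppn : ∀ n, μn n (Set.Icc 0 K)ᶜ = 0)
    (hmass : μ Set.univ = ENNReal.ofReal d)
    (hmassn : ∀ n, μn n Set.univ = ENNReal.ofReal d)
    (hmom : ∀ m : ℕ, Tendsto (fun n => ∫ t, t ^ m ∂(μn n)) atTop (nhds (∫ t, t ^ m ∂μ)))
    (hlogint : ∀ n, IntegrableOn Real.log (Set.Ioc 0 K) (μn n))
    (hdet : ∀ n, C ≤ ∫ t in Set.Ioc 0 K, Real.log t ∂(μn n)) :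
    Tendsto (fun n => (μn n {0}).toReal) atTop (nhds ((μ {0}).toReal)) := by
  rw [Metric.tendsto_atTop]
  intro δ hδ
  set M := max (max (Real.log K) 0 * d - C) 0 with hM
  have hM0 : 0 ≤ M := le_max_right _ _
  -- choose ε₂ with μ (Ioc 0 ε₂) < ofReal (δ/4)
  have hmono : Antitone fun k : ℕ => Set.Ioc (0:ℝ) (1 / (k + 1)) := by
    intro i j hij
    apply Set.Ioc_subset_Ioc_right
    apply one_div_le_one_div_of_le (by positivity)
    exact_mod_cast Nat.add_le_add_right hij 1
  have hempty : (⋂ k : ℕ, Set.Ioc (0:ℝ) (1 / (k + 1))) = ∅ := by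
    ext t
    simp only [Set.mem_iInter, Set.mem_Ioc, Set.mem_empty_iff_false, iff_false, not_forall]
    by_contra h
    push_neg at h
    obtain ⟨k, hk⟩ := exists_nat_one_div_lt (h 0).1
    exact absurd ((h k).2) (not_le.mpr (by exact_mod_cast hk))
  have h2 : Tendsto (fun k : ℕ => μ (Set.Ioc 0 (1 / (k + 1)))) atTop (nhds 0) := by
    have := tendsto_measure_iInter_atTop
      (μ := μ) (s := fun k : ℕ => Set.Ioc (0:ℝ) (1 / (k + 1)))
      (fun k => measurableSet_Ioc.nullMeasurableSet) hmono ⟨0, measure_ne_top μ _⟩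
    rwa [hempty, measure_empty] at this
  obtain ⟨k0, hk0⟩ := (h2.eventually_lt_const
    (show (0:ℝ≥0∞) < ENNReal.ofReal (δ / 4) from ENNReal.ofReal_pos.mpr (by linarith))).exists
  set ε₂ : ℝ := 1 / (k0 + 1) with hε₂
  have hε₂0 : 0 < ε₂ := by positivity
  set ε₁ : ℝ := Real.exp (-(4 * M / δ + 1)) with hε₁
  have hε₁0 : 0 < ε₁ := Real.exp_pos _
  set ε : ℝ := min ε₁ ε₂ with hε
  have hε0 : 0 < ε := lt_min hε₁0 hε₂0
  have hε1 : ε < 1 := by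
    have : ε₁ < 1 := Real.exp_lt_one_iff.mpr (by
      have : (0:ℝ) < 4 * M / δ + 1 := by positivity
      linarith)
    exact lt_of_le_of_lt (min_le_left _ _) this
  -- negative log bound
  have hlogε : 4 * M / δ + 1 ≤ -Real.log ε := by
    have h3 : Real.log ε ≤ Real.log ε₁ := Real.log_le_log hε0 (min_le_left _ _)
    rw [hε₁, Real.log_exp] at h3
    linarith
  -- uniform bound on μn masses near 0
  have hAn : ∀ n, (μn n (Set.Ioc 0 (min ε K))).toReal ≤ δ / 4 := by
    intro n
    have h4 := aux_small_mass hK hd (hmassn n) (hlogint n) (hdet n) hε0 hε1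
    rw [← hM] at h4
    set a := (μn n (Set.Ioc 0 (min ε K))).toReal with ha
    have ha0 : 0 ≤ a := ENNReal.toReal_nonneg
    have h5 : a * (4 * M / δ + 1) ≤ M := le_trans (mul_le_mul_of_nonneg_left hlogε ha0) h4
    have h6 : a * (4 * M + δ) ≤ M * δ := by
      have := mul_le_mul_of_nonneg_right h5 hδ.le
      have hδ' : δ ≠ 0 := ne_of_gt hδ
      field_simp at this
      nlinarith
    nlinarith
  -- bound for μ near 0
  have hB : (μ (Set.Ioc 0 (min ε K))).toReal ≤ δ / 4 := by
    have h7 : μ (Set.Ioc 0 (min ε K)) ≤ μ (Set.Ioc 0 ε₂) :=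
      measure_mono (Set.Ioc_subset_Ioc_right ((min_le_left _ _).trans (min_le_right _ _)))
    exact ENNReal.toReal_le_of_le_ofReal (by linarith) (h7.trans hk0.le)
  -- weak convergence of the bump integral
  have hgc : Continuous fun t : ℝ => max 0 (1 - t / ε) :=
    continuous_const.max (continuous_const.sub (continuous_id.div_const ε))
  obtain ⟨N, hN⟩ := Metric.tendsto_atTop.mp
    (aux_tendsto_integral_cont hd hsupp hsuppn hmass hmassn hmom hgc) (δ / 4)
    (by linarith)
  refine ⟨N, fun n hn => ?_⟩
  have e1 := aux_g_est hK (hsuppn n) hε0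
  have e2 := aux_g_est hK hsupp hε0
  have e3 := hN n hn
  rw [Real.dist_eq] at e3 ⊢
  have t1 := (abs_le.mp (e1.trans (hAn n)))
  have t2 := (abs_le.mp (e2.trans hB))
  have t3 := abs_le.mp e3.le
  rw [abs_lt]
  obtain ⟨a1, a2⟩ := t1
  obtain ⟨b1, b2⟩ := t2
  obtain ⟨c1, c2⟩ := t3
  constructor <;> linarith

lemma aux_cont_logmax {ε : ℝ} (hε : 0 < ε) :
    Continuous fun t : ℝ => Real.log (max t ε) :=
  (continuous_id.max continuous_const).log
    fun t => (lt_of_lt_of_le hε (le_max_right t ε)).ne'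

/-- Step A: the truncated log integral over `(0,K]` w.r.t. `μ` is still `≥ C`. -/
lemma aux_trunc_bound {K d C : ℝ} (hK : 0 ≤ K) (hd : 0 ≤ d)
    {μ : Measure ℝ} {μn : ℕ → Measure ℝ}
    [IsFiniteMeasure μ] [∀ n, IsFiniteMeasure (μn n)]
    (hsupp : μ (Set.Icc 0 K)ᶜ = 0) (hsuppn : ∀ n, μn n (Set.Icc 0 K)ᶜ = 0)
    (hmass : μ Set.univ = ENNReal.ofReal d)
    (hmassn : ∀ n, μn n Set.univ = ENNReal.ofReal d)
    (hmom : ∀ m : ℕ, Tendsto (fun n => ∫ t, t ^ m ∂(μn n)) atTop (nhds (∫ t, t ^ m ∂μ)))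
    (hlogint : ∀ n, IntegrableOn Real.log (Set.Ioc 0 K) (μn n))
    (hdet : ∀ n, C ≤ ∫ t in Set.Ioc 0 K, Real.log t ∂(μn n))
    (hatom : Tendsto (fun n => (μn n {0}).toReal) atTop (nhds ((μ {0}).toReal)))
    {ε : ℝ} (hε0 : 0 < ε) :
    C ≤ ∫ t in Set.Ioc 0 K, Real.log (max t ε) ∂μ := by
  have hc := aux_cont_logmax hε0
  have hf0 : Real.log (max 0 ε) = Real.log ε := by rw [max_eq_right hε0.le]
  -- lower bound for each n
  have hstep : ∀ n, C + Real.log ε * (μn n {0}).toReal ≤ ∫ t, Real.log (max t ε) ∂(μn n) := by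
    intro n
    have hdec := aux_integral_decomp hK (hsuppn n) hc
    rw [hf0] at hdec
    have hmono : ∫ t in Set.Ioc 0 K, Real.log t ∂(μn n)
        ≤ ∫ t in Set.Ioc 0 K, Real.log (max t ε) ∂(μn n) := by
      refine setIntegral_mono_on (hlogint n)
        ((aux_integrable_of_cont (aux_ae_mem_Icc (hsuppn n)) hc).integrableOn)
        measurableSet_Ioc ?_
      intro t ht
      exact Real.log_le_log ht.1 (le_max_left _ _)
    have := hdet n
    linarith [hdec.ge]
  -- pass to the limit
  have hlim1 : Tendsto (fun n => C + Real.log ε * (μn n {0}).toReal) atTop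
      (nhds (C + Real.log ε * (μ {0}).toReal)) :=
    tendsto_const_nhds.add (hatom.const_mul _)
  have hlim2 : Tendsto (fun n => ∫ t, Real.log (max t ε) ∂(μn n)) atTop
      (nhds (∫ t, Real.log (max t ε) ∂μ)) :=
    aux_tendsto_integral_cont hd hsupp hsuppn hmass hmassn hmom hc
  have hle : C + Real.log ε * (μ {0}).toReal ≤ ∫ t, Real.log (max t ε) ∂μ :=
    le_of_tendsto_of_tendsto' hlim1 hlim2 hstep
  have hdec := aux_integral_decomp hK hsupp hc
  rw [hf0] at hdec
  linarith [hdec.le]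

/-- Step B: monotone convergence gives integrability and the bound for `log`. -/
lemma aux_log_bound {K d C : ℝ} (hK : 0 ≤ K) (hd : 0 ≤ d)
    {μ : Measure ℝ} [IsFiniteMeasure μ]
    (htrunc : ∀ ε : ℝ, 0 < ε → C ≤ ∫ t in Set.Ioc 0 K, Real.log (max t ε) ∂μ) :
    IntegrableOn Real.log (Set.Ioc 0 K) μ ∧
      C ≤ ∫ t in Set.Ioc 0 K, Real.log t ∂μ := by
  set e : ℕ → ℝ := fun k => Real.exp (-(k + 1 : ℝ)) with he
  have he0 : ∀ k, 0 < e k := fun k => Real.exp_pos _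
  have hemono : ∀ {i j : ℕ}, i ≤ j → e j ≤ e i := by
    intro i j hij
    apply Real.exp_le_exp.mpr
    have : (i:ℝ) ≤ j := Nat.cast_le.mpr hij
    linarith
  set ν := μ.restrict (Set.Ioc 0 K) with hν
  set φ : ℝ → ℝ := fun t => Real.log (max t (e 0)) - Real.log t with hφ
  set F : ℕ → ℝ → ℝ := fun k t => Real.log (max t (e 0)) - Real.log (max t (e k)) with hF
  have hFcont : ∀ k, Continuous (fun t => Real.log (max t (e k))) :=
    fun k => aux_cont_logmax (he0 k)
  have hFnonneg : ∀ k t, 0 ≤ F k t := by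
    intro k t
    have : Real.log (max t (e k)) ≤ Real.log (max t (e 0)) :=
      Real.log_le_log (lt_max_of_lt_right (he0 k)) (max_le (le_max_left _ _)
        ((hemono (Nat.zero_le k)).trans (le_max_right _ _)))
    simpa [hF] using sub_nonneg.mpr this
  have hFle : ∀ k, ∀ t ∈ Set.Ioc (0:ℝ) K, F k t ≤ φ t := by
    intro k t ht
    have : Real.log t ≤ Real.log (max t (e k)) :=
      Real.log_le_log ht.1 (le_max_left _ _)
    simp only [hF, hφ]
    linarith
  have hFmono : Monotone fun k => fun t => ENNReal.ofReal (F k t) := by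
    intro i j hij
    intro t
    refine ENNReal.ofReal_le_ofReal ?_
    have : Real.log (max t (e j)) ≤ Real.log (max t (e i)) :=
      Real.log_le_log (lt_max_of_lt_right (he0 j)) (max_le (le_max_left _ _)
        ((hemono hij).trans (le_max_right _ _)))
    simp only [hF]
    linarith
  have hFmeas : ∀ k, Measurable fun t => ENNReal.ofReal (F k t) :=
    fun k => (((hFcont 0).sub (hFcont k)).measurable).ennreal_ofReal
  -- iSup identification on (0, K]
  have hsup : ∀ t ∈ Set.Ioc (0:ℝ) K,
      (⨆ k, ENNReal.ofReal (F k t)) = ENNReal.ofReal (φ t) := by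
    intro t ht
    refine le_antisymm (iSup_le fun k => ENNReal.ofReal_le_ofReal (hFle k t ht)) ?_
    obtain ⟨k, hk⟩ : ∃ k : ℕ, e k ≤ t := by
      obtain ⟨k, hk⟩ := exists_nat_one_div_lt ht.1
      refine ⟨k, ?_⟩
      have h1 : e k ≤ 1 / (k + 1 : ℝ) := by
        show Real.exp (-((k:ℝ) + 1)) ≤ 1 / ((k:ℝ) + 1)
        rw [Real.exp_neg, one_div]
        have h2 : ((k:ℝ) + 1) ≤ Real.exp ((k:ℝ) + 1) := by
          have := Real.add_one_le_exp ((k:ℝ) + 1)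
          linarith
        exact inv_anti₀ (by positivity) h2
      exact h1.trans hk.le
    have : F k t = φ t := by
      simp only [hF, hφ, max_eq_left hk]
    exact le_iSup_of_le k (by rw [this])
  -- integrability of truncated logs on (0, K]
  have hint : ∀ k, Integrable (fun t => Real.log (max t (e k))) ν :=
    fun k => ((hFcont k).continuousOn.integrableOn_compact isCompact_Icc).mono_set
      Set.Ioc_subset_Icc_self
  have hFint : ∀ k, Integrable (F k) ν := fun k => (hint 0).sub (hint k)
  have hFval : ∀ k, ∫ t, F k t ∂ν
      = (∫ t, Real.log (max t (e 0)) ∂ν) - ∫ t, Real.log (max t (e k)) ∂ν :=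
    fun k => integral_sub (hint 0) (hint k)
  have hFbound : ∀ k, ∫ t, F k t ∂ν ≤ (∫ t, Real.log (max t (e 0)) ∂ν) - C := by
    intro k
    have h9 := htrunc (e k) (he0 k)
    rw [hFval k]
    linarith
  have hlint : ∀ k, ∫⁻ t, ENNReal.ofReal (F k t) ∂ν = ENNReal.ofReal (∫ t, F k t ∂ν) :=
    fun k => (ofReal_integral_eq_lintegral_ofReal (hFint k)
      (Filter.Eventually.of_forall (hFnonneg k))).symm
  have hlbound : ∫⁻ t, ENNReal.ofReal (φ t) ∂ν
      ≤ ENNReal.ofReal ((∫ t, Real.log (max t (e 0)) ∂ν) - C) := by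
    have hcong : ∫⁻ t, ENNReal.ofReal (φ t) ∂ν = ∫⁻ t, ⨆ k, ENNReal.ofReal (F k t) ∂ν :=
      lintegral_congr_ae ((ae_restrict_mem measurableSet_Ioc).mono
        fun t ht => (hsup t ht).symm)
    rw [hcong, lintegral_iSup hFmeas hFmono]
    exact iSup_le fun k => by
      rw [hlint k]; exact ENNReal.ofReal_le_ofReal (hFbound k)
  have hφmeas : Measurable φ := ((hFcont 0).measurable).sub Real.measurable_log
  have hφnonneg : 0 ≤ᵐ[ν] φ := (ae_restrict_mem measurableSet_Ioc).mono fun t ht => by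
    have := Real.log_le_log ht.1 (le_max_left t (e 0))
    simp only [hφ, Pi.zero_apply]
    linarith
  have hφint : Integrable φ ν := by
    refine ⟨hφmeas.aestronglyMeasurable, ?_⟩
    rw [hasFiniteIntegral_iff_ofReal hφnonneg]
    exact lt_of_le_of_lt hlbound ENNReal.ofReal_lt_top
  have hfun : (fun t => Real.log (max t (e 0)) - φ t) = Real.log := by
    funext t
    simp only [hφ]
    ring
  have hlogint : IntegrableOn Real.log (Set.Ioc 0 K) μ := by
    rw [show (Real.log : ℝ → ℝ) = fun t => Real.log (max t (e 0)) - φ t from hfun.symm]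
    exact (hint 0).sub hφint
  refine ⟨hlogint, ?_⟩
  have hφval : ∫ t, φ t ∂ν ≤ (∫ t, Real.log (max t (e 0)) ∂ν) - C := by
    rw [integral_eq_lintegral_of_nonneg_ae hφnonneg hφmeas.aestronglyMeasurable]
    have h0 : C ≤ ∫ t, Real.log (max t (e 0)) ∂ν := htrunc (e 0) (he0 0)
    calc (∫⁻ t, ENNReal.ofReal (φ t) ∂ν).toReal
        ≤ (ENNReal.ofReal ((∫ t, Real.log (max t (e 0)) ∂ν) - C)).toReal :=
          ENNReal.toReal_mono ENNReal.ofReal_ne_top hlbound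
      _ = _ := ENNReal.toReal_ofReal (by linarith)
  have hsplit2 : ∫ t, Real.log t ∂ν = (∫ t, Real.log (max t (e 0)) ∂ν) - ∫ t, φ t ∂ν := by
    rw [← integral_sub (hint 0) hφint]
    rw [show (fun t => Real.log (max t (e 0)) - φ t) = Real.log from hfun]
  have h0 : C ≤ ∫ t, Real.log (max t (e 0)) ∂ν := htrunc (e 0) (he0 0)
  have : ∫ t, Real.log t ∂ν ≥ C := by
    rw [hsplit2]
    linarith
  exact this

/-- Let `μ, μ_n` be finite Borel measures on `[0, K]`, all of total mass
`d`, whose moments converge: `∫ t^m dμ_n → ∫ t^m dμ` for all `m`.  If the logarithmic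
moments are uniformly bounded below, `∫_{(0,K]} ln t dμ_n ≥ C` for all `n`, then also
`∫_{(0,K]} ln t dμ ≥ C`, and `μ_n({0}) → μ({0})`. -/
theorem determinant_bound_convergence
    (K d C : ℝ) (hK : 0 ≤ K) (hd : 0 ≤ d)
    (μ : Measure ℝ) (μn : ℕ → Measure ℝ)
    [IsFiniteMeasure μ] [∀ n, IsFiniteMeasure (μn n)]
    (hsupp : μ (Set.Icc 0 K)ᶜ = 0) (hsuppn : ∀ n, μn n (Set.Icc 0 K)ᶜ = 0)
    (hmass : μ Set.univ = ENNReal.ofReal d)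
    (hmassn : ∀ n, μn n Set.univ = ENNReal.ofReal d)
    (hmom : ∀ m : ℕ, Tendsto (fun n => ∫ t, t ^ m ∂(μn n)) atTop (nhds (∫ t, t ^ m ∂μ)))
    (hlogint : ∀ n, IntegrableOn Real.log (Set.Ioc 0 K) (μn n))
    (hdet : ∀ n, C ≤ ∫ t in Set.Ioc 0 K, Real.log t ∂(μn n)) :
    (IntegrableOn Real.log (Set.Ioc 0 K) μ ∧
      C ≤ ∫ t in Set.Ioc 0 K, Real.log t ∂μ) ∧
    Tendsto (fun n => (μn n {0}).toReal) atTop (nhds ((μ {0}).toReal)) := by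
  have hatom := aux_atom_tendsto hK hd hsupp hsuppn hmass hmassn hmom hlogint hdet
  have htrunc : ∀ ε : ℝ, 0 < ε → C ≤ ∫ t in Set.Ioc 0 K, Real.log (max t ε) ∂μ :=
    fun ε hε => aux_trunc_bound hK hd hsupp hsuppn hmass hmassn hmom hlogint hdet hatom hε
  exact ⟨aux_log_bound hK hd htrunc, hatom⟩
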